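/- arXiv:2408.11621 — 2 statements merged into one kernel-verified Lean document; each statement's English description precedes it below -/
import Mathlib

section
/- Let σ > 0, k > 0, 0 < μ̄ < min(σ√(π/2), k). For μ ∈ ℝ, define E(μ) = 1/2 + (μ̄/(2k))·(1 − 2Φ(−μ/σ)). Then for all μ with 0 ≤ μ ≤ k, (μ + k)(1 − E(μ)) ≥ (k − μ)E(μ), i.e., the profiled regret of the Γ-PER rule on [0,k] equals (μ + k)(1 − E(μ)). -/
/-- The standard normal cumulative distribution function. -/
noncomputable def Phi (x : ℝ) : ℝ :=
  ∫ t in Set.Iic x, ProbabilityTheory.gaussianPDFReal 0 1 t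

open MeasureTheory ProbabilityTheory in
lemma Phi_neg (t : ℝ) : Phi (-t) = 1 - Phi t := by
  have hint : Integrable (gaussianPDFReal 0 1) := integrable_gaussianPDFReal 0 1
  have heven : ∀ x : ℝ, gaussianPDFReal 0 1 (-x) = gaussianPDFReal 0 1 x := by
    intro x
    simp [gaussianPDFReal, neg_sq]
  have hsym : (∫ x in Set.Iic (-t), gaussianPDFReal 0 1 x)
      = ∫ x in Set.Ioi t, gaussianPDFReal 0 1 x := by
    rw [← integral_comp_neg_Ioi]
    simp_rw [heven]
  have hsplit : (∫ x in Set.Iic t, gaussianPDFReal 0 1 x)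
      + ∫ x in Set.Ioi t, gaussianPDFReal 0 1 x = 1 := by
    rw [← setIntegral_union (by simp [Set.disjoint_left]) measurableSet_Ioi
      hint.restrict hint.restrict, Set.Iic_union_Ioi]
    rw [setIntegral_univ]
    exact integral_gaussianPDFReal_eq_one 0 one_ne_zero
  unfold Phi
  rw [hsym]; linarith

open MeasureTheory ProbabilityTheory NNReal in
lemma Phi_diff_le {t : ℝ} (ht : 0 ≤ t) :
    Phi t - Phi (-t) ≤ 2 * t * (Real.sqrt (2 * Real.pi))⁻¹ := by
  have hint : Integrable (gaussianPDFReal 0 1) := integrable_gaussianPDFReal 0 1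
  have hdiff : Phi t - Phi (-t) = ∫ x in Set.Ioc (-t) t, gaussianPDFReal 0 1 x := by
    unfold Phi
    rw [intervalIntegral.integral_Iic_sub_Iic hint.integrableOn hint.integrableOn,
      intervalIntegral.integral_of_le (by linarith)]
  have hple : ∀ x : ℝ, gaussianPDFReal 0 1 x ≤ (Real.sqrt (2 * Real.pi))⁻¹ := by
    intro x
    rw [gaussianPDFReal]
    have h1 : Real.exp (-(x - 0) ^ 2 / (2 * ((1:ℝ≥0):ℝ))) ≤ 1 := by
      rw [Real.exp_le_one_iff]
      have h0 : (0:ℝ) ≤ (x - 0)^2 := sq_nonneg _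
      push_cast
      nlinarith
    calc (Real.sqrt (2 * Real.pi * ((1:ℝ≥0):ℝ)))⁻¹ * Real.exp (-(x - 0) ^ 2 / (2 * ((1:ℝ≥0):ℝ)))
        ≤ (Real.sqrt (2 * Real.pi * ((1:ℝ≥0):ℝ)))⁻¹ * 1 :=
          mul_le_mul_of_nonneg_left h1 (by positivity)
      _ = (Real.sqrt (2 * Real.pi))⁻¹ := by push_cast; rw [mul_one, mul_one]
  have hbound : (∫ x in Set.Ioc (-t) t, gaussianPDFReal 0 1 x)
      ≤ ∫ _x in Set.Ioc (-t) t, (Real.sqrt (2 * Real.pi))⁻¹ := by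
    apply setIntegral_mono_on hint.integrableOn (integrableOn_const (by simp) enorm_ne_top)
      measurableSet_Ioc
    exact fun x _ => hple x
  rw [hdiff]
  refine hbound.trans ?_
  rw [setIntegral_const, Real.volume_real_Ioc_of_le (by linarith : -t ≤ t), smul_eq_mul]
  have : t - -t = 2 * t := by ring
  rw [this]

/-- for `0 < μ̄ < min(σ√(π/2), k)` and
`E(μ) = 1/2 + (μ̄/(2k))(1 − 2Φ(−μ/σ))`, for all `μ ∈ [0, k]`,
`(μ + k)(1 − E(μ)) ≥ (k − μ)E(μ)`. -/
theorem per_profiled_regret_branch (σ k μbar : ℝ) (hσ : 0 < σ) (hk : 0 < k)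
    (hμbar0 : 0 < μbar)
    (hμbar : μbar < min (σ * Real.sqrt (Real.pi / 2)) k)
    (E : ℝ → ℝ)
    (hE : ∀ μ, E μ = 1 / 2 + (μbar / (2 * k)) * (1 - 2 * Phi (-μ / σ))) :
    ∀ μ ∈ Set.Icc (0:ℝ) k, (k - μ) * E μ ≤ (μ + k) * (1 - E μ) := by
  intro μ hμ
  obtain ⟨hμ0, hμk⟩ := hμ
  have ht : (0:ℝ) ≤ μ / σ := div_nonneg hμ0 hσ.le
  have h1 : Phi (μ / σ) - Phi (-(μ / σ)) ≤ 2 * (μ / σ) * (Real.sqrt (2 * Real.pi))⁻¹ :=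
    Phi_diff_le ht
  have h2 : Phi (-(μ / σ)) = 1 - Phi (μ / σ) := Phi_neg _
  -- key: μbar * (1 - 2 * Phi (-μ/σ)) ≤ μ
  have hs : Real.sqrt (2 * Real.pi) = 2 * Real.sqrt (Real.pi / 2) := by
    rw [show (2 * Real.pi) = 2^2 * (Real.pi / 2) by ring,
      Real.sqrt_mul (by positivity), Real.sqrt_sq (by norm_num)]
  have hμb : μbar < σ * Real.sqrt (2 * Real.pi) / 2 := by
    have h := (lt_min_iff.mp hμbar).1
    rw [hs]; nlinarith
  have hsqrt : 0 < Real.sqrt (2 * Real.pi) := Real.sqrt_pos.mpr (by positivity)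
  have hkey : μbar * (1 - 2 * Phi (-μ / σ)) ≤ μ := by
    rw [neg_div, h2]
    have hd : 1 - 2 * (1 - Phi (μ / σ)) = Phi (μ / σ) - Phi (-(μ / σ)) := by
      rw [h2]; ring
    rw [hd]
    have h3 : μbar * (Phi (μ / σ) - Phi (-(μ / σ)))
        ≤ μbar * (2 * (μ / σ) * (Real.sqrt (2 * Real.pi))⁻¹) :=
      mul_le_mul_of_nonneg_left h1 hμbar0.le
    refine h3.trans ?_
    have heq : μbar * (2 * (μ / σ) * (Real.sqrt (2 * Real.pi))⁻¹)
        = (2 * μbar) * μ / (σ * Real.sqrt (2 * Real.pi)) := by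
      field_simp
    rw [heq, div_le_iff₀ (by positivity)]
    nlinarith [mul_le_mul_of_nonneg_left hμb.le hμ0]
  rw [hE]
  have hEexp : (k - μ) * (1 / 2 + (μbar / (2 * k)) * (1 - 2 * Phi (-μ / σ)))
      ≤ (μ + k) * (1 - (1 / 2 + (μbar / (2 * k)) * (1 - 2 * Phi (-μ / σ)))) := by
    have h2k : (0:ℝ) < 2 * k := by linarith
    have : (μ + k) * (1 - (1 / 2 + (μbar / (2 * k)) * (1 - 2 * Phi (-μ / σ))))
        - (k - μ) * (1 / 2 + (μbar / (2 * k)) * (1 - 2 * Phi (-μ / σ)))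
        = μ - μbar * (1 - 2 * Phi (-μ / σ)) := by
      field_simp; ring
    linarith [this]
  exact hEexp
end

section
/- Let σ > 0, k > 0 and define for μ ≥ 0 the function R̄(μ) = (μ + k)·(1/2 − (μ̄/(2k))·(1 − 2Φ(−μ/σ))). There exists a constant C_k > 0 (the maximum over μ ≥ 0 of 2(μ+k)φ(μ/σ)/σ) such that for all 0 < μ̄ < min(k/(1 + C_k), σ√(π/2)), R̄ is strictly increasing on [0, ∞), and R̄(0) = k/2. -/
open MeasureTheory ProbabilityTheory Set

lemma gauss_eq (x : ℝ) : ProbabilityTheory.gaussianPDFReal 0 1 x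
    = (Real.sqrt (2 * Real.pi))⁻¹ * Real.exp (-x ^ 2 / 2) := by
  simp [ProbabilityTheory.gaussianPDFReal]

lemma gauss_cont : Continuous (ProbabilityTheory.gaussianPDFReal 0 1) := by
  have h : ProbabilityTheory.gaussianPDFReal 0 1
      = fun x => (Real.sqrt (2 * Real.pi))⁻¹ * Real.exp (-x ^ 2 / 2) := funext gauss_eq
  rw [h]; fun_prop

lemma gauss_even (x : ℝ) : ProbabilityTheory.gaussianPDFReal 0 1 (-x)
    = ProbabilityTheory.gaussianPDFReal 0 1 x := by
  rw [gauss_eq, gauss_eq, neg_sq]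

lemma gauss_pos (x : ℝ) : 0 < ProbabilityTheory.gaussianPDFReal 0 1 x :=
  ProbabilityTheory.gaussianPDFReal_pos 0 1 x one_ne_zero

lemma hasDerivAt_Phi (x : ℝ) :
    HasDerivAt Phi (ProbabilityTheory.gaussianPDFReal 0 1 x) x := by
  have hint : Integrable (ProbabilityTheory.gaussianPDFReal 0 1) :=
    ProbabilityTheory.integrable_gaussianPDFReal 0 1
  have hfun : Phi = fun y =>
      (∫ t in (0:ℝ)..y, ProbabilityTheory.gaussianPDFReal 0 1 t) + Phi 0 := by
    funext y
    have h := intervalIntegral.integral_Iic_sub_Iic (μ := volume)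
      (f := ProbabilityTheory.gaussianPDFReal 0 1) (a := 0) (b := y)
      hint.integrableOn hint.integrableOn
    simp only [Phi] at *
    linarith
  rw [hfun]
  exact (intervalIntegral.integral_hasDerivAt_right hint.intervalIntegrable
    (gauss_cont.stronglyMeasurableAtFilter _ _) gauss_cont.continuousAt).add_const _

lemma Phi_nonneg (x : ℝ) : 0 ≤ Phi x :=
  setIntegral_nonneg measurableSet_Iic fun t _ =>
    ProbabilityTheory.gaussianPDFReal_nonneg 0 1 t

lemma Phi_zero : Phi 0 = 1 / 2 := by
  have hint : Integrable (ProbabilityTheory.gaussianPDFReal 0 1) :=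
    ProbabilityTheory.integrable_gaussianPDFReal 0 1
  have h1 : Phi 0 + (∫ t in Ioi (0:ℝ), ProbabilityTheory.gaussianPDFReal 0 1 t) = 1 := by
    rw [Phi, intervalIntegral.integral_Iic_add_Ioi hint.integrableOn hint.integrableOn]
    exact ProbabilityTheory.integral_gaussianPDFReal_eq_one 0 one_ne_zero
  have h2 : (∫ t in Ioi (0:ℝ), ProbabilityTheory.gaussianPDFReal 0 1 t) = Phi 0 := by
    have := integral_comp_neg_Ioi (0:ℝ) (ProbabilityTheory.gaussianPDFReal 0 1)
    simp only [gauss_even, neg_zero] at this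
    rw [this]; rfl
  rw [h2] at h1; linarith

/-- there is a constant `C_k > 0`, the maximum over `μ ≥ 0` of
`2(μ+k)φ(μ/σ)/σ`, such that for all `0 < μ̄ < min(k/(1+C_k), σ√(π/2))` the profiled regret
`R̄(μ) = (μ+k)(1/2 − (μ̄/(2k))(1 − 2Φ(−μ/σ)))` is strictly increasing on `[0, ∞)` with
`R̄(0) = k/2`. -/
theorem per_profiled_regret_increasing (σ k : ℝ) (hσ : 0 < σ) (hk : 0 < k)
    (R : ℝ → ℝ → ℝ)
    (hR : ∀ μbar μ, R μbar μ
      = (μ + k) * (1 / 2 - (μbar / (2 * k)) * (1 - 2 * Phi (-μ / σ)))) :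
    ∃ Ck : ℝ, 0 < Ck ∧
      IsGreatest ((fun μ => 2 * (μ + k) * ProbabilityTheory.gaussianPDFReal 0 1 (μ / σ) / σ)
        '' Set.Ici 0) Ck ∧
      ∀ μbar : ℝ, 0 < μbar →
        μbar < min (k / (1 + Ck)) (σ * Real.sqrt (Real.pi / 2)) →
        StrictMonoOn (R μbar) (Set.Ici 0) ∧ R μbar 0 = k / 2 := by
  set g : ℝ → ℝ := fun μ => 2 * (μ + k) * ProbabilityTheory.gaussianPDFReal 0 1 (μ / σ) / σ
    with hg_def
  have hgcont : Continuous g := by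
    apply Continuous.div_const
    exact (continuous_const.mul (continuous_id.add continuous_const)).mul
      (gauss_cont.comp (continuous_id.div_const σ))
  set M : ℝ := max k (4 * σ ^ 2 / k) with hM_def
  have hM0 : (0:ℝ) ≤ M := le_trans hk.le (le_max_left _ _)
  obtain ⟨x₀, hx₀mem, hx₀max⟩ : ∃ x₀ ∈ Icc (0:ℝ) M, IsMaxOn g (Icc 0 M) x₀ :=
    isCompact_Icc.exists_isMaxOn ⟨0, le_refl 0, hM0⟩ hgcont.continuousOn
  -- key bound for μ > M
  have htail : ∀ μ : ℝ, M < μ → g μ ≤ g 0 := by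
    intro μ hμ
    have hμk : k ≤ μ := le_of_lt (lt_of_le_of_lt (le_max_left _ _) hμ)
    have hμσ : 4 * σ ^ 2 / k ≤ μ := le_of_lt (lt_of_le_of_lt (le_max_right _ _) hμ)
    have hμpos : 0 < μ := lt_of_lt_of_le hk hμk
    have hσ2 : 4 * σ ^ 2 ≤ k * μ := by
      rw [div_le_iff₀ hk] at hμσ; linarith
    -- exp bound
    have hxpos : 0 < μ ^ 2 / (2 * σ ^ 2) := by positivity
    have hexp : Real.exp (-(μ / σ) ^ 2 / 2) ≤ (μ ^ 2 / (2 * σ ^ 2))⁻¹ := by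
      have h1 : -(μ / σ) ^ 2 / 2 = -(μ ^ 2 / (2 * σ ^ 2)) := by
        field_simp
      rw [h1, Real.exp_neg]
      apply inv_anti₀ hxpos
      exact le_trans (le_add_of_nonneg_right zero_le_one) (Real.add_one_le_exp _)
    have hinv : (μ ^ 2 / (2 * σ ^ 2))⁻¹ = 2 * σ ^ 2 / μ ^ 2 := by
      rw [inv_div]
    rw [hinv] at hexp
    -- now compare g μ and g 0
    have hμ2pos : (0:ℝ) < μ ^ 2 := by positivity
    have hkey : (μ + k) * Real.exp (-(μ / σ) ^ 2 / 2) ≤ k := by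
      have h2 : 2 * σ ^ 2 * (μ + k) ≤ k * μ ^ 2 := by nlinarith
      have h3 : (μ + k) * Real.exp (-(μ / σ) ^ 2 / 2) ≤ (μ + k) * (2 * σ ^ 2 / μ ^ 2) :=
        mul_le_mul_of_nonneg_left hexp (by linarith)
      have h4 : (μ + k) * (2 * σ ^ 2 / μ ^ 2) ≤ k := by
        rw [show (μ + k) * (2 * σ ^ 2 / μ ^ 2) = 2 * σ ^ 2 * (μ + k) / μ ^ 2 by ring,
          div_le_iff₀ hμ2pos]
        nlinarith
      linarith
    have hc : (0:ℝ) < (Real.sqrt (2 * Real.pi))⁻¹ := by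
      rw [inv_pos]
      exact Real.sqrt_pos.mpr (by positivity)
    simp only [hg_def, gauss_eq]
    rw [div_le_div_iff₀ hσ hσ]
    have hz : -(0:ℝ) ^ 2 / 2 = 0 := by norm_num
    rw [zero_div, hz, Real.exp_zero]
    have : 2 * (μ + k) * ((Real.sqrt (2 * Real.pi))⁻¹ * Real.exp (-(μ / σ) ^ 2 / 2))
        ≤ 2 * k * (Real.sqrt (2 * Real.pi))⁻¹ := by nlinarith [hkey, hc.le]
    nlinarith [this, hσ]
  set Ck : ℝ := g x₀ with hCk_def
  have hCk_ub : ∀ μ ∈ Ici (0:ℝ), g μ ≤ Ck := by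
    intro μ hμ
    rcases le_or_gt μ M with h | h
    · exact hx₀max ⟨hμ, h⟩
    · exact le_trans (htail μ h) (hx₀max ⟨le_refl 0, hM0⟩)
  have hCk_pos : 0 < Ck := by
    have : 0 < g 0 := by
      simp only [hg_def]
      have := gauss_pos (0 / σ)
      positivity
    exact lt_of_lt_of_le this (hCk_ub 0 (Set.mem_Ici.mpr le_rfl))
  refine ⟨Ck, hCk_pos, ⟨⟨x₀, hx₀mem.1, rfl⟩, ?_⟩, ?_⟩
  · rintro y ⟨μ, hμ, rfl⟩
    exact hCk_ub μ hμ
  intro μbar hμbar hμbar_lt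
  have hμbar_k : μbar * (1 + Ck) < k := by
    have h1 : μbar < k / (1 + Ck) := lt_of_lt_of_le hμbar_lt (min_le_left _ _)
    have h2 : (0:ℝ) < 1 + Ck := by linarith
    rw [lt_div_iff₀ h2] at h1; exact h1
  set a : ℝ := μbar / (2 * k) with ha_def
  have ha_pos : 0 < a := by positivity
  have ha_bound : a * (1 + Ck) < 1 / 2 := by
    rw [ha_def, div_mul_eq_mul_div, div_lt_div_iff₀ (by linarith) (by norm_num)]
    linarith
  set F : ℝ → ℝ := fun μ => (μ + k) * (1 / 2 - a * (1 - 2 * Phi (-μ / σ))) with hF_def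
  have hRF : R μbar = F := funext fun μ => hR μbar μ
  -- derivative of F
  have hderiv : ∀ μ : ℝ, HasDerivAt F
      (1 * (1 / 2 - a * (1 - 2 * Phi (-μ / σ)))
        + (μ + k) * -(a * -(2 * (ProbabilityTheory.gaussianPDFReal 0 1 (-μ / σ) * (-1 / σ))))) μ := by
    intro μ
    have hlin : HasDerivAt (fun x : ℝ => -x / σ) (-1 / σ) μ := by
      simpa using ((hasDerivAt_id μ).neg.div_const σ)
    have hΦ : HasDerivAt (fun x : ℝ => Phi (-x / σ))
        (ProbabilityTheory.gaussianPDFReal 0 1 (-μ / σ) * (-1 / σ)) μ :=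
      by have h := hasDerivAt_Phi (-μ / σ); exact h.comp μ hlin
    have hinner : HasDerivAt (fun x : ℝ => 1 / 2 - a * (1 - 2 * Phi (-x / σ)))
        (-(a * -(2 * (ProbabilityTheory.gaussianPDFReal 0 1 (-μ / σ) * (-1 / σ))))) μ :=
      (((hΦ.const_mul 2).const_sub 1).const_mul a).const_sub (1 / 2)
    have houter : HasDerivAt (fun x : ℝ => x + k) 1 μ := (hasDerivAt_id μ).add_const k
    exact houter.mul hinner
  have hdiff : Differentiable ℝ F := fun μ => (hderiv μ).differentiableAt
  constructor
  · rw [hRF]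
    apply strictMonoOn_of_deriv_pos (convex_Ici 0) hdiff.continuous.continuousOn
    intro μ hμ
    rw [interior_Ici] at hμ
    have hμ0 : (0:ℝ) ≤ μ := le_of_lt hμ
    rw [(hderiv μ).deriv]
    have hq : ProbabilityTheory.gaussianPDFReal 0 1 (-μ / σ)
        = ProbabilityTheory.gaussianPDFReal 0 1 (μ / σ) := by
      rw [neg_div, gauss_even]
    rw [hq]
    have hgμ : 2 * (μ + k) * ProbabilityTheory.gaussianPDFReal 0 1 (μ / σ) / σ ≤ Ck :=
      hCk_ub μ hμ0
    have hp : 0 ≤ Phi (-μ / σ) := Phi_nonneg _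
    have hq0 : 0 ≤ ProbabilityTheory.gaussianPDFReal 0 1 (μ / σ) :=
      (gauss_pos _).le
    have hterm : (μ + k) * -(a * -(2 * (ProbabilityTheory.gaussianPDFReal 0 1 (μ / σ) * (-1 / σ))))
        = -(a * (2 * (μ + k) * ProbabilityTheory.gaussianPDFReal 0 1 (μ / σ) / σ)) := by
      ring
    rw [hterm]
    have h1 : a * (2 * (μ + k) * ProbabilityTheory.gaussianPDFReal 0 1 (μ / σ) / σ) ≤ a * Ck :=
      mul_le_mul_of_nonneg_left hgμ ha_pos.le
    have h2 : 0 ≤ a * Phi (-μ / σ) := mul_nonneg ha_pos.le hp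
    nlinarith [h1, h2, ha_bound]
  · rw [hRF, hF_def]
    simp only [neg_zero, zero_div, Phi_zero]
    ring
end
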